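/- arXiv:1806.08411 — 2 statements merged into one kernel-verified Lean document; each statement's English description precedes it below -/
import Mathlib

section
/- For every positive integer k, ∑_{n≥0} (C(2n,n)/4^n)² / ((n+1)_k · (1/2 - n)_k) = 2^{8k-3} Γ(k)² / (π Γ(4k)). -/
/-- Rising Pochhammer symbol `(a)_k = a (a+1) ⋯ (a+k-1)`. -/
noncomputable def poch (a : ℝ) (k : ℕ) : ℝ := ∏ i ∈ Finset.range k, (a + i)

open Filter Finset
open scoped Nat

noncomputable def cbq (n : ℕ) : ℝ := (Nat.centralBinom n : ℝ) / 4 ^ n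

noncomputable def tt (k n : ℕ) : ℝ :=
  cbq n ^ 2 / (poch ((n : ℝ) + 1) k * poch (1 / 2 - (n : ℝ)) k)

noncomputable def vv (k n : ℕ) : ℝ :=
  (-8) * n * (4 * n - 1) * tt k n / (2 * k + 1 - 2 * n)

lemma poch_succ (a : ℝ) (k : ℕ) : poch a (k + 1) = poch a k * (a + k) :=
  Finset.prod_range_succ _ _

lemma poch_zero (a : ℝ) : poch a 0 = 1 := Finset.prod_range_zero _

lemma poch_one (a : ℝ) : poch a 1 = a := by
  simp [poch]

lemma poch_shift (a : ℝ) (k : ℕ) : a * poch (a + 1) k = poch a k * (a + k) := by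
  induction k with
  | zero => simp [poch_zero]
  | succ k ih =>
    rw [poch_succ, poch_succ]
    push_cast
    linear_combination (a + 1 + (k:ℝ)) * ih

lemma poch_pos {a : ℝ} (ha : 0 < a) (k : ℕ) : 0 < poch a k := by
  apply Finset.prod_pos
  intro i _
  positivity

lemma odd_ne (a b : ℕ) : (2 * (a : ℝ) + 1) - 2 * b ≠ 0 := by
  intro h
  have h2 : ((2 * a + 1 : ℕ) : ℝ) = ((2 * b : ℕ) : ℝ) := by push_cast; linarith
  have := Nat.cast_injective h2
  omega

lemma half_ne (n i : ℕ) : (1 : ℝ) / 2 - n + i ≠ 0 := by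
  intro h
  apply odd_ne i n
  linarith

lemma poch_half_ne (n k : ℕ) : poch (1 / 2 - (n : ℝ)) k ≠ 0 := by
  apply Finset.prod_ne_zero_iff.2
  intro i _
  exact half_ne n i

lemma cbq_pos (n : ℕ) : 0 < cbq n := by
  unfold cbq
  have h : (0:ℝ) < (Nat.centralBinom n : ℝ) := by exact_mod_cast Nat.centralBinom_pos n
  positivity

lemma cbq_zero : cbq 0 = 1 := by simp [cbq, Nat.centralBinom]

lemma cbq_succ (n : ℕ) : cbq (n + 1) = cbq n * (2 * n + 1) / (2 * n + 2) := by
  have h := Nat.succ_mul_centralBinom_succ n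
  have h2 : ((n + 1 : ℕ) : ℝ) * (Nat.centralBinom (n + 1) : ℝ)
      = 2 * (2 * n + 1) * (Nat.centralBinom n : ℝ) := by exact_mod_cast congrArg Nat.cast h
  unfold cbq
  push_cast at h2 ⊢
  rw [pow_succ]
  have hn1 : (n : ℝ) + 1 ≠ 0 := by positivity
  have h4 : (4 : ℝ) ^ n ≠ 0 := by positivity
  field_simp
  linear_combination 2 * h2

lemma cbq_sq_le (n : ℕ) : cbq n ^ 2 * (2 * n + 1) ≤ 1 := by
  induction n with
  | zero => simp [cbq_zero]
  | succ n ih =>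
    have h := cbq_succ n
    have hp := cbq_pos n
    have hn2 : (2 * (n : ℝ) + 2) ≠ 0 := by positivity
    rw [h]
    push_cast
    rw [div_pow, div_mul_eq_mul_div, div_le_one (by positivity)]
    nlinarith [ih, sq_nonneg (cbq n)]

lemma poch_ge (n : ℕ) : ∀ k : ℕ, 1 ≤ k → (n : ℝ) + 1 ≤ poch ((n : ℝ) + 1) k := by
  intro k hk
  induction k, hk using Nat.le_induction with
  | base => rw [poch_one]
  | succ k hk ih =>
    rw [poch_succ]
    have h1 : (1 : ℝ) ≤ (n : ℝ) + 1 + k := by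
      have : (0:ℝ) ≤ (n:ℝ) := Nat.cast_nonneg n
      have : (0:ℝ) ≤ (k:ℝ) := Nat.cast_nonneg k
      linarith
    nlinarith [Nat.cast_nonneg (α := ℝ) n]

lemma half_abs (n k : ℕ) : (1 : ℝ) / 2 ≤ |1 / 2 - (n : ℝ) + k| := by
  rcases le_or_gt n k with h | h
  · have : (n : ℝ) ≤ k := by exact_mod_cast h
    rw [abs_of_nonneg (by linarith)]
    linarith
  · have : (k : ℝ) + 1 ≤ n := by exact_mod_cast h
    rw [abs_of_nonpos (by linarith)]
    linarith

lemma poch_half_ge (n : ℕ) (hn : 1 ≤ n) :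
    ∀ k : ℕ, 1 ≤ k → (n : ℝ) - 1 / 2 ≤ 2 ^ (k - 1) * |poch (1 / 2 - (n : ℝ)) k| := by
  intro k hk
  induction k, hk using Nat.le_induction with
  | base =>
    rw [poch_one]
    have hn' : (1 : ℝ) ≤ n := by exact_mod_cast hn
    rw [abs_of_nonpos (by linarith), pow_zero]
    linarith
  | succ k hk ih =>
    obtain ⟨m, rfl⟩ : ∃ m, k = m + 1 := ⟨k - 1, by omega⟩
    have hs : (m + 1 + 1) - 1 = (m + 1 - 1) + 1 := by omega
    rw [poch_succ, abs_mul, hs, pow_succ]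
    have habs := half_abs n (m + 1)
    have hpos : (0 : ℝ) ≤ |poch (1 / 2 - (n : ℝ)) (m + 1)| := abs_nonneg _
    have hpow : (0 : ℝ) < 2 ^ (m + 1 - 1) := by positivity
    nlinarith [ih, mul_le_mul_of_nonneg_left habs
      (show (0:ℝ) ≤ 2 ^ (m + 1 - 1) * 2 * |poch (1 / 2 - (n : ℝ)) (m + 1)| by positivity)]

lemma tt_bound (k n : ℕ) (hk : 1 ≤ k) (hn : 1 ≤ n) :
    (n : ℝ) * |tt k n| ≤ 2 ^ k / ((n : ℝ) + 1) ^ 2 := by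
  have hn' : (1 : ℝ) ≤ n := by exact_mod_cast hn
  have hP1 : 0 < poch ((n : ℝ) + 1) k := poch_pos (by positivity) k
  have hP1n := poch_ge n k hk
  have hP2 : 0 < |poch (1 / 2 - (n : ℝ)) k| := abs_pos.2 (poch_half_ne n k)
  have hP2b := poch_half_ge n hn k hk
  have hc := cbq_sq_le n
  have hcnn : 0 ≤ cbq n ^ 2 := sq_nonneg _
  have h2 : (2 : ℝ) ^ k = 2 * 2 ^ (k - 1) := by
    obtain ⟨m, rfl⟩ : ∃ m, k = m + 1 := ⟨k - 1, by omega⟩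
    rw [Nat.add_sub_cancel, pow_succ]; ring
  have habs : |tt k n| = cbq n ^ 2 / (poch ((n : ℝ) + 1) k * |poch (1 / 2 - (n : ℝ)) k|) := by
    rw [tt, abs_div, abs_mul, abs_of_pos hP1, abs_of_nonneg hcnn]
  rw [habs, ← mul_div_assoc, div_le_div_iff₀ (by positivity) (by positivity)]
  have hpow : (0 : ℝ) < 2 ^ (k - 1) := by positivity
  have key1 : (n : ℝ) * cbq n ^ 2 * ((n : ℝ) + 1) ^ 2 ≤ ((n : ℝ) + 1) * (2 * n - 1) := by
    nlinarith [mul_le_mul_of_nonneg_left hc (show (0:ℝ) ≤ (n:ℝ) * ((n:ℝ)+1)^2 by positivity),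
      sq_nonneg ((n:ℝ) + 1), sq_nonneg ((n:ℝ) - 1)]
  have key2 : ((n : ℝ) + 1) * (2 * n - 1) ≤ 2 ^ k * (poch ((n : ℝ) + 1) k * |poch (1 / 2 - (n : ℝ)) k|) := by
    have hmul : ((n : ℝ) + 1) * ((n : ℝ) - 1 / 2) ≤
        poch ((n : ℝ) + 1) k * (2 ^ (k - 1) * |poch (1 / 2 - (n : ℝ)) k|) :=
      mul_le_mul hP1n hP2b (by linarith) (le_of_lt hP1)
    nlinarith [hmul]
  nlinarith [key1, key2]

lemma summable_aux (k : ℕ) : Summable (fun n : ℕ => (2 : ℝ) ^ k / ((n : ℝ) + 1) ^ 2) := by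
  have h0 : Summable (fun n : ℕ => (1 : ℝ) / (n : ℝ) ^ 2) :=
    Real.summable_one_div_nat_pow.mpr one_lt_two
  have h1 : Summable (fun n : ℕ => (1 : ℝ) / ((n : ℝ) + 1) ^ 2) := by
    have := (summable_nat_add_iff 1).2 h0
    refine this.congr fun n => ?_
    push_cast
    ring
  have := h1.mul_left ((2 : ℝ) ^ k)
  refine this.congr fun n => ?_
  ring

lemma summable_ntt (k : ℕ) (hk : 1 ≤ k) : Summable (fun n : ℕ => (n : ℝ) * |tt k n|) := by
  refine Summable.of_norm_bounded_eventually_nat (summable_aux k) ?_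
  filter_upwards [eventually_ge_atTop 1] with n hn
  rw [Real.norm_eq_abs, abs_of_nonneg (by positivity)]
  exact tt_bound k n hk hn

lemma summable_tt (k : ℕ) (hk : 1 ≤ k) : Summable (tt k) := by
  refine Summable.of_norm_bounded_eventually_nat (summable_ntt k hk) ?_
  filter_upwards [eventually_ge_atTop 1] with n hn
  rw [Real.norm_eq_abs]
  have hn' : (1 : ℝ) ≤ n := by exact_mod_cast hn
  nlinarith [abs_nonneg (tt k n)]

lemma summable_vv (k : ℕ) (hk : 1 ≤ k) : Summable (vv k) := by
  refine Summable.of_norm_bounded_eventually_nat ((summable_ntt k hk).mul_left 32) ?_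
  filter_upwards [eventually_ge_atTop (2 * k + 1)] with n hn
  have hn' : 2 * (k : ℝ) + 1 ≤ n := by exact_mod_cast hn
  have hd : (n : ℝ) ≤ |2 * (k : ℝ) + 1 - 2 * n| := by
    rw [abs_of_nonpos (by linarith)]
    linarith
  have hdpos : (0 : ℝ) < |2 * (k : ℝ) + 1 - 2 * n| := by
    have : (1 : ℝ) ≤ (n : ℝ) := by linarith
    linarith
  rw [Real.norm_eq_abs, vv, abs_div, div_le_iff₀ hdpos, abs_mul, abs_mul, abs_mul]
  have h8 : |(-8 : ℝ)| = 8 := by norm_num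
  have hnn : |(n : ℝ)| = n := abs_of_nonneg (Nat.cast_nonneg n)
  have h4 : |4 * (n : ℝ) - 1| = 4 * n - 1 := abs_of_nonneg (by linarith)
  rw [h8, hnn, h4]
  nlinarith [abs_nonneg (tt k n), mul_le_mul_of_nonneg_left hd
    (show (0:ℝ) ≤ 32 * (n : ℝ) * |tt k n| by positivity)]

lemma wallis_eq (n : ℕ) : (2 * (n : ℝ) + 1) * cbq n ^ 2 * Real.Wallis.W n = 1 := by
  have hcb : (Nat.centralBinom n : ℝ) * ((n ! : ℝ) * (n ! : ℝ)) = ((2 * n)! : ℝ) := by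
    have h := Nat.choose_mul_factorial_mul_factorial (show n ≤ 2 * n by omega)
    have h3 : 2 * n - n = n := by omega
    rw [h3] at h
    rw [Nat.centralBinom]
    have h' : (2 * n).choose n * (n ! * n !) = (2 * n)! := by rw [← h]; ring
    exact_mod_cast congrArg Nat.cast h'
  have hsq : ((2 * n)! : ℝ) ^ 2 = (Nat.centralBinom n : ℝ) ^ 2 * (n ! : ℝ) ^ 4 := by
    rw [← hcb]; ring
  have hf : ((n ! : ℝ)) ≠ 0 := by positivity
  have hc0 : (Nat.centralBinom n : ℝ) ≠ 0 := by
    have : (0:ℝ) < (Nat.centralBinom n : ℝ) := by exact_mod_cast Nat.centralBinom_pos n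
    linarith
  have h4 : (4 : ℝ) ^ n ≠ 0 := by positivity
  have h2n : (2 * (n : ℝ) + 1) ≠ 0 := by positivity
  have hpow : (2 : ℝ) ^ (4 * n) = ((4 : ℝ) ^ n) ^ 2 := by
    rw [show (4:ℝ) = 2^2 by norm_num, ← pow_mul, ← pow_mul]
    ring_nf
  rw [Real.Wallis.W_eq_factorial_ratio, cbq, hsq, hpow]
  field_simp

lemma tendsto_cbq : Tendsto (fun n : ℕ => (2 * (n : ℝ) + 1) * cbq n ^ 2)
    atTop (nhds (2 / Real.pi)) := by
  have hW := Real.Wallis.tendsto_W_nhds_pi_div_two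
  have h2 : Tendsto (fun n : ℕ => (Real.Wallis.W n)⁻¹) atTop (nhds ((Real.pi / 2)⁻¹)) :=
    hW.inv₀ (ne_of_gt Real.pi_div_two_pos)
  have h3 : (Real.pi / 2)⁻¹ = 2 / Real.pi := by rw [inv_div]
  rw [h3] at h2
  refine h2.congr fun n => ?_
  exact inv_eq_of_mul_eq_one_left (wallis_eq n)

noncomputable def gg (N : ℕ) : ℝ := 8 / 3 * N * (4 * N - 1) * cbq N ^ 2 / (2 * N - 1)

lemma two_cast_ne (N : ℕ) : 2 * (N : ℝ) - 1 ≠ 0 := by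
  intro h; apply odd_ne 0 N; push_cast; linarith

lemma sum_range_tt1 (N : ℕ) : ∑ n ∈ range N, tt 1 n = gg N := by
  induction N with
  | zero => simp [gg]
  | succ N ih =>
    rw [Finset.sum_range_succ, ih]
    have h4 : (1 / 2 - (N : ℝ)) ≠ 0 := by
      have := half_ne N 0; push_cast at this; intro h; apply this; linarith
    have h1 : 2 * (N : ℝ) - 1 ≠ 0 := two_cast_ne N
    have h3 : ((N : ℝ) + 1) ≠ 0 := by positivity
    have ht : tt 1 N = (-2) * cbq N ^ 2 / (((N : ℝ) + 1) * (2 * (N : ℝ) - 1)) := by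
      rw [tt, poch_one, poch_one, div_eq_div_iff (mul_ne_zero h3 h4) (mul_ne_zero h3 h1)]
      ring
    rw [ht]
    unfold gg
    rw [cbq_succ N]
    have h2 : 2 * ((N : ℕ) : ℝ) + 1 ≠ 0 := by positivity
    have h5 : 2 * ((N : ℝ) + 1) - 1 ≠ 0 := by
      intro h; apply odd_ne N 0; push_cast; linarith
    have h6 : 2 * (N : ℝ) + 2 ≠ 0 := by positivity
    push_cast
    field_simp
    rw [div_eq_iff (by rw [mul_comm]; exact h1)]
    ring

lemma tendsto_gg : Tendsto gg atTop (nhds (16 / (3 * Real.pi))) := by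
  have h1 : Tendsto (fun N : ℕ => ((N : ℝ) - 1) / (4 * (N : ℝ) ^ 2 - 1)) atTop (nhds 0) := by
    apply squeeze_zero' (g := fun N : ℕ => 1 / (N : ℝ))
    · filter_upwards [eventually_ge_atTop 1] with N hN
      have hN' : (1 : ℝ) ≤ N := by exact_mod_cast hN
      have hden : (0:ℝ) < 4 * (N : ℝ) ^ 2 - 1 := by nlinarith
      exact div_nonneg (by linarith) (by linarith)
    · filter_upwards [eventually_ge_atTop 1] with N hN
      have hN' : (1 : ℝ) ≤ N := by exact_mod_cast hN
      rw [div_le_div_iff₀ (by nlinarith) (by linarith)]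
      nlinarith
    · exact tendsto_one_div_atTop_nhds_zero_nat
  have hr : Tendsto (fun N : ℕ => (N : ℝ) * (4 * N - 1) / ((2 * N - 1) * (2 * N + 1)))
      atTop (nhds 1) := by
    have h2 := (tendsto_const_nhds (x := (1:ℝ)) (f := atTop)).sub h1
    rw [sub_zero] at h2
    refine h2.congr fun N => ?_
    have ha : 2 * (N : ℝ) - 1 ≠ 0 := two_cast_ne N
    have hb : 2 * (N : ℝ) + 1 ≠ 0 := by positivity
    have hsq : 4 * (N : ℝ) ^ 2 - 1 ≠ 0 := by
      intro h; apply ha; nlinarith [sq_nonneg (2 * (N:ℝ) + 1)]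
    rw [one_sub_div hsq, div_eq_div_iff hsq (mul_ne_zero ha hb)]
    ring
  have hcomb := (tendsto_cbq.const_mul (8/3 : ℝ)).mul hr
  have hval : 8 / 3 * (2 / Real.pi) * 1 = 16 / (3 * Real.pi) := by
    rw [mul_one]; field_simp; ring
  rw [hval] at hcomb
  refine hcomb.congr fun N => ?_
  have ha : 2 * (N : ℝ) - 1 ≠ 0 := two_cast_ne N
  have hb : 2 * (N : ℝ) + 1 ≠ 0 := by positivity
  unfold gg
  field_simp

lemma hasSum_tt1 : HasSum (tt 1) (16 / (3 * Real.pi)) := by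
  have hs := summable_tt 1 le_rfl
  have h1 := hs.hasSum
  have h2 := h1.tendsto_sum_nat
  have h3 : Tendsto gg atTop (nhds (∑' n, tt 1 n)) := by
    refine h2.congr fun N => sum_range_tt1 N
  have h4 := tendsto_nhds_unique h3 tendsto_gg
  rwa [h4] at h1

lemma tt_ratio_k (k n : ℕ) :
    tt (k + 1) n = tt k n * 2 / (((k : ℝ) + n + 1) * (2 * (k : ℝ) + 1 - 2 * n)) := by
  have hP1 : poch ((n : ℝ) + 1) k ≠ 0 := ne_of_gt (poch_pos (by positivity) k)
  have hP2 : poch (1 / 2 - (n : ℝ)) k ≠ 0 := poch_half_ne n k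
  have hc : 2 * (k : ℝ) + 1 - 2 * n ≠ 0 := by
    intro h; apply odd_ne k n; push_cast; linarith
  have hd : 1 / 2 - (n : ℝ) + k ≠ 0 := half_ne n k
  have hNK : (k : ℝ) + n + 1 ≠ 0 := by positivity
  simp only [tt, poch_succ]
  field_simp
  ring

lemma cbq_succ_mul (n : ℕ) :
    cbq (n + 1) * (2 * (n : ℝ) + 2) = cbq n * (2 * (n : ℝ) + 1) := by
  rw [cbq_succ n]
  have h6 : 2 * (n : ℝ) + 2 ≠ 0 := by positivity
  field_simp

lemma tt_ratio_n (k n : ℕ) :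
    tt k (n + 1) * ((2 * (n : ℝ) + 2) ^ 2 * ((n : ℝ) + 1 + k)) =
      tt k n * (-((2 * (n : ℝ) + 1) * (2 * (k : ℝ) - 1 - 2 * n)) * ((n : ℝ) + 1)) := by
  have hP1 : poch ((n : ℝ) + 1) k ≠ 0 := ne_of_gt (poch_pos (by positivity) k)
  have hP2 : poch (1 / 2 - (n : ℝ)) k ≠ 0 := poch_half_ne n k
  have hQ1 : poch ((n : ℝ) + 1 + 1) k ≠ 0 := ne_of_gt (poch_pos (by positivity) k)
  have hQ2 : poch (1 / 2 - ((n : ℝ) + 1)) k ≠ 0 := by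
    have h0 := poch_half_ne (n + 1) k
    push_cast at h0
    exact h0
  have hy := cbq_succ_mul n
  have h1 := poch_shift ((n : ℝ) + 1) k
  have h2' := poch_shift (1 / 2 - ((n : ℝ) + 1)) k
  rw [show 1 / 2 - ((n : ℝ) + 1) + 1 = 1 / 2 - (n : ℝ) by ring] at h2'
  simp only [tt]
  push_cast
  rw [div_mul_eq_mul_div, div_mul_eq_mul_div,
    div_eq_div_iff (mul_ne_zero hQ1 hQ2) (mul_ne_zero hP1 hP2)]
  linear_combination ((cbq (n+1) * (2*(n:ℝ)+2) + cbq n * (2*(n:ℝ)+1)) * ((n:ℝ)+1+k) *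
      poch ((n:ℝ)+1) k * poch (1/2 - (n:ℝ)) k) * hy -
    (cbq n ^ 2 * (2*(n:ℝ)+1)^2 * poch (1/2 - (n:ℝ)) k) * h1 -
    (2 * (2*(n:ℝ)+1) * cbq n ^ 2 * ((n:ℝ)+1) * poch ((n:ℝ)+1+1) k) * h2'

lemma tt_n_succ (k n : ℕ) :
    tt k (n + 1) = tt k n * (-((2 * (n : ℝ) + 1) * (2 * (k : ℝ) - 1 - 2 * n)) * ((n : ℝ) + 1)) /
      ((2 * (n : ℝ) + 2) ^ 2 * ((n : ℝ) + 1 + k)) := by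
  have hden : (2 * (n : ℝ) + 2) ^ 2 * ((n : ℝ) + 1 + k) ≠ 0 := by positivity
  rw [eq_div_iff hden]
  exact tt_ratio_n k n

lemma scalar_step (k n : ℕ) :
    2 * ((4 * (k : ℝ) + 1) * ((2 * (k : ℝ) + 1) * (4 * (k : ℝ) + 3))) /
        (((k : ℝ) + n + 1) * (2 * (k : ℝ) + 1 - 2 * n)) =
      32 * (k : ℝ) +
        ((-8) * ((n : ℝ) + 1) * (4 * ((n : ℝ) + 1) - 1) *
            ((-((2 * (n : ℝ) + 1) * (2 * (k : ℝ) - 1 - 2 * n)) * ((n : ℝ) + 1)) /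
              ((2 * (n : ℝ) + 2) ^ 2 * ((n : ℝ) + 1 + k))) / (2 * (k : ℝ) + 1 - 2 * ((n : ℝ) + 1))
          - (-8) * (n : ℝ) * (4 * (n : ℝ) - 1) / (2 * (k : ℝ) + 1 - 2 * (n : ℝ))) := by
  have hb : 2 * (k : ℝ) + 1 - 2 * ((n : ℝ) + 1) ≠ 0 := by
    intro h; apply odd_ne k (n + 1); push_cast; linarith
  have hc : 2 * (k : ℝ) + 1 - 2 * (n : ℝ) ≠ 0 := by
    intro h; apply odd_ne k n; push_cast; linarith
  have hN : (n : ℝ) + 1 ≠ 0 := by positivity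
  have hN2 : 2 * (n : ℝ) + 2 ≠ 0 := by positivity
  have hNK : (n : ℝ) + 1 + k ≠ 0 := by positivity
  have hNK2 : (k : ℝ) + n + 1 ≠ 0 := by positivity
  field_simp
  ring

set_option maxHeartbeats 1000000 in
lemma tt_step (k n : ℕ) (hk : 1 ≤ k) :
    tt (k + 1) n = (32 * (k : ℝ) * tt k n + (vv k (n + 1) - vv k n)) *
      ((4 * (k : ℝ) + 1) * ((2 * (k : ℝ) + 1) * (4 * (k : ℝ) + 3)))⁻¹ := by
  have hD : (4 * (k : ℝ) + 1) * ((2 * (k : ℝ) + 1) * (4 * (k : ℝ) + 3)) ≠ 0 := by positivity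
  have hM : tt (k + 1) n * ((4 * (k : ℝ) + 1) * ((2 * (k : ℝ) + 1) * (4 * (k : ℝ) + 3))) =
      32 * (k : ℝ) * tt k n + (vv k (n + 1) - vv k n) := by
    simp only [vv]
    rw [tt_n_succ k n, tt_ratio_k k n]
    push_cast
    linear_combination (tt k n) * scalar_step k n
  rw [← hM, mul_inv_cancel_right₀ hD]

lemma hasSum_step {k : ℕ} (hk : 1 ≤ k) {S : ℝ} (hS : HasSum (tt k) S) :
    HasSum (tt (k + 1))
      ((32 * (k : ℝ) * S + 0) * ((4 * (k : ℝ) + 1) * ((2 * (k : ℝ) + 1) * (4 * (k : ℝ) + 3)))⁻¹) := by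
  have hv : Summable (vv k) := summable_vv k hk
  have hv0 : vv k 0 = 0 := by simp [vv]
  have h0 : HasSum (vv k) ((∑' n, vv k n - vv k 0) + ∑ i ∈ range 1, vv k i) := by
    simpa [Finset.sum_range_one] using hv.hasSum
  have h1 : HasSum (fun n => vv k (n + 1)) (∑' n, vv k n - vv k 0) :=
    (hasSum_nat_add_iff 1).2 h0
  have htel : HasSum (fun n => vv k (n + 1) - vv k n) 0 := by
    have h2 := h1.sub hv.hasSum
    have h3 : (∑' n, vv k n - vv k 0) - ∑' n, vv k n = 0 := by rw [hv0]; ring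
    rwa [h3] at h2
  have hmain := ((hS.mul_left (32 * (k : ℝ))).add htel).mul_right
    (((4 * (k : ℝ) + 1) * ((2 * (k : ℝ) + 1) * (4 * (k : ℝ) + 3)))⁻¹)
  have hfun : (fun n => (32 * (k : ℝ) * tt k n + (vv k (n + 1) - vv k n)) *
      ((4 * (k : ℝ) + 1) * ((2 * (k : ℝ) + 1) * (4 * (k : ℝ) + 3)))⁻¹) = tt (k + 1) :=
    funext fun n => (tt_step k n hk).symm
  rwa [hfun] at hmain

lemma main : ∀ k : ℕ, 1 ≤ k → HasSum (tt k)
    (2 ^ (8 * k - 3) * Real.Gamma k ^ 2 / (Real.pi * Real.Gamma (4 * k))) := by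
  intro k hk
  induction k, hk using Nat.le_induction with
  | base =>
    have hval : (2 : ℝ) ^ (8 * 1 - 3) * Real.Gamma (1 : ℕ) ^ 2 /
        (Real.pi * Real.Gamma (4 * ((1 : ℕ) : ℝ))) = 16 / (3 * Real.pi) := by
      have h4 : (4 : ℝ) * ((1 : ℕ) : ℝ) = ((3 : ℕ) : ℝ) + 1 := by push_cast; norm_num
      rw [h4, Real.Gamma_nat_eq_factorial]
      simp only [Nat.cast_one, Real.Gamma_one]
      norm_num [Nat.factorial]
      field_simp
      ring
    rw [hval]
    exact hasSum_tt1
  | succ k hk ih =>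
    have h := hasSum_step hk ih
    have hkR : (1 : ℝ) ≤ k := by exact_mod_cast hk
    have hk0 : (k : ℝ) ≠ 0 := by linarith
    have hG : Real.Gamma (4 * ((k : ℕ) : ℝ) + 1 + 1 + 1 + 1) =
        (4 * (k : ℝ) + 3) * ((4 * (k : ℝ) + 2) * ((4 * (k : ℝ) + 1) * ((4 * (k : ℝ)) *
          Real.Gamma (4 * (k : ℝ))))) := by
      rw [Real.Gamma_add_one (by positivity), Real.Gamma_add_one (by positivity),
        Real.Gamma_add_one (by positivity), Real.Gamma_add_one (by positivity)]
      ring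
    have hval : (32 * (k : ℝ) * (2 ^ (8 * k - 3) * Real.Gamma k ^ 2 /
          (Real.pi * Real.Gamma (4 * k))) + 0) *
        ((4 * (k : ℝ) + 1) * ((2 * (k : ℝ) + 1) * (4 * (k : ℝ) + 3)))⁻¹ =
        2 ^ (8 * (k + 1) - 3) * Real.Gamma (k + 1 : ℕ) ^ 2 /
          (Real.pi * Real.Gamma (4 * ((k + 1 : ℕ) : ℝ))) := by
      have e1 : 8 * (k + 1) - 3 = (8 * k - 3) + 8 := by omega
      have e2 : ((k + 1 : ℕ) : ℝ) = (k : ℝ) + 1 := by push_cast; ring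
      have e3 : 4 * ((k : ℝ) + 1) = 4 * ((k : ℕ) : ℝ) + 1 + 1 + 1 + 1 := by
        push_cast; ring
      rw [e1, e2, e3, pow_add, hG, Real.Gamma_add_one hk0]
      have hGpos : 0 < Real.Gamma (4 * (k : ℝ)) := Real.Gamma_pos_of_pos (by positivity)
      have hGne : Real.Gamma (4 * (k : ℝ)) ≠ 0 := ne_of_gt hGpos
      have hD1 : 4 * (k : ℝ) + 1 ≠ 0 := by positivity
      have hD2 : 2 * (k : ℝ) + 1 ≠ 0 := by positivity
      have hD3 : 4 * (k : ℝ) + 3 ≠ 0 := by positivity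
      have hD4 : 4 * (k : ℝ) + 2 ≠ 0 := by positivity
      field_simp
      ring
    rw [hval] at h
    exact h

theorem stmt_9 (k : ℕ) (hk : 0 < k) :
    ∑' n : ℕ, (((Nat.centralBinom n : ℝ) / 4 ^ n) ^ 2 /
        (poch ((n : ℝ) + 1) k * poch (1 / 2 - (n : ℝ)) k)) =
      2 ^ (8 * k - 3) * Real.Gamma k ^ 2 / (Real.pi * Real.Gamma (4 * k)) := by
  exact (main k hk).tsum_eq
end

section
/- The series ∑_{n≥0} (C(2n,n)/4^n)² / ((4n+3)(1-4n)) equals 1/π. -/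
open Filter Finset Real

noncomputable def cb (n : ℕ) : ℝ := (Nat.centralBinom n : ℝ) / 4 ^ n

lemma cb_pos (n : ℕ) : 0 < cb n :=
  div_pos (by exact_mod_cast n.centralBinom_pos) (by positivity)

lemma centralBinom_le_four_pow (n : ℕ) : Nat.centralBinom n ≤ 4 ^ n := by
  induction n with
  | zero => simp
  | succ n ih =>
    have h := Nat.succ_mul_centralBinom_succ n
    have h2 : (n + 1) * Nat.centralBinom (n + 1) ≤ (n + 1) * (4 * Nat.centralBinom n) := by
      rw [h]; nlinarith [n.centralBinom_pos]
    have := Nat.le_of_mul_le_mul_left h2 (Nat.succ_pos n)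
    calc Nat.centralBinom (n+1) ≤ 4 * Nat.centralBinom n := this
      _ ≤ 4 * 4 ^ n := by omega
      _ = 4 ^ (n+1) := by ring

lemma cb_le_one (n : ℕ) : cb n ≤ 1 := by
  rw [cb, div_le_one (by positivity)]
  exact_mod_cast centralBinom_le_four_pow n

lemma one_sub_ne (n : ℕ) : (1 : ℝ) - 4 * n ≠ 0 := by
  rcases n with _ | m
  · norm_num
  · have h0 : (0:ℝ) ≤ (m:ℝ) := Nat.cast_nonneg m
    push_cast; nlinarith

lemma cb_succ (n : ℕ) : ((n : ℝ) + 1) * cb (n + 1) * 4 = 2 * (2 * n + 1) * cb n := by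
  have h := Nat.succ_mul_centralBinom_succ n
  have h4 : (4:ℝ) ^ n ≠ 0 := by positivity
  have hc : ((n:ℝ) + 1) * (Nat.centralBinom (n+1) : ℝ)
      = 2 * (2 * (n:ℝ) + 1) * (Nat.centralBinom n : ℝ) := by exact_mod_cast h
  rw [cb, cb]
  field_simp
  linear_combination (4:ℝ) ^ n * 4 * hc

noncomputable def tf (n : ℕ) : ℝ := cb n ^ 2 * (4 * n ^ 2 / (1 - 4 * n))

lemma telescope (n : ℕ) :
    cb n ^ 2 / ((4 * (n : ℝ) + 3) * (1 - 4 * n)) = tf n - tf (n + 1) := by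
  have h1 : (1 : ℝ) - 4 * n ≠ 0 := one_sub_ne n
  have h2 : (1 : ℝ) - 4 * (n + 1 : ℕ) ≠ 0 := one_sub_ne (n + 1)
  push_cast at h2
  have h3 : (4 : ℝ) * n + 3 ≠ 0 := by positivity
  have h4 : ((n : ℝ) + 1) ≠ 0 := by positivity
  have hs := cb_succ n
  have hsub : cb (n + 1) = 2 * (2 * n + 1) * cb n / (((n:ℝ) + 1) * 4) := by
    field_simp; linarith [hs]
  rw [tf, tf, hsub]
  push_cast
  field_simp
  ring

lemma sum_range_eq (N : ℕ) :
    ∑ n ∈ Finset.range N, cb n ^ 2 / ((4 * (n : ℝ) + 3) * (1 - 4 * n)) = - tf N := by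
  have h : ∀ n ∈ Finset.range N, cb n ^ 2 / ((4 * (n : ℝ) + 3) * (1 - 4 * n)) = tf n - tf (n+1) :=
    fun n _ => telescope n
  rw [Finset.sum_congr rfl h, Finset.sum_range_sub' tf]
  have h0 : tf 0 = 0 := by simp [tf]
  rw [h0, zero_sub]

lemma cb_sq_eq (n : ℕ) : cb n ^ 2 = 1 / ((2 * n + 1) * Real.Wallis.W n) := by
  have hW := Real.Wallis.W_eq_factorial_ratio n
  have hfac : (Nat.centralBinom n : ℝ) * (n.factorial : ℝ) * (n.factorial : ℝ)
      = ((2 * n).factorial : ℝ) := by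
    have h := Nat.choose_mul_factorial_mul_factorial
      (Nat.le_mul_of_pos_left n (by norm_num) : n ≤ 2 * n)
    have h2 : 2 * n - n = n := by omega
    rw [h2] at h
    exact_mod_cast h
  have hW2 : Real.Wallis.W n = ((4:ℝ) ^ n) ^ 2 * (n.factorial : ℝ) ^ 4 /
      (((2 * n).factorial : ℝ) ^ 2 * (2 * n + 1)) := by
    rw [hW]
    have : (2:ℝ) ^ (4 * n) = ((4:ℝ) ^ n) ^ 2 := by
      rw [show (4:ℝ) = 2 ^ 2 by norm_num, ← pow_mul, ← pow_mul]
      congr 1; omega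
    rw [this]
  have hf : (n.factorial : ℝ) ≠ 0 := by exact_mod_cast n.factorial_ne_zero
  have hf2 : ((2 * n).factorial : ℝ) ≠ 0 := by exact_mod_cast (2 * n).factorial_ne_zero
  have h2n : (2 * (n : ℝ) + 1) ≠ 0 := by positivity
  have h4 : (4 : ℝ) ^ n ≠ 0 := by positivity
  rw [cb, hW2, div_pow]
  rw [div_eq_div_iff (by positivity) (by
    apply mul_ne_zero h2n
    apply div_ne_zero (by positivity)
    exact mul_ne_zero (pow_ne_zero 2 hf2) h2n)]
  field_simp
  linear_combination ((Nat.centralBinom n : ℝ) * (n.factorial : ℝ) * (n.factorial : ℝ)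
      + ((2 * n).factorial : ℝ)) * hfac

lemma neg_tf_eq (n : ℕ) :
    - tf n = 4 * (n:ℝ) ^ 2 / ((4 * n - 1) * (2 * n + 1)) * (Real.Wallis.W n)⁻¹ := by
  have h1 : (1 : ℝ) - 4 * n ≠ 0 := one_sub_ne n
  have h1' : (4 : ℝ) * n - 1 ≠ 0 := by intro h; apply h1; linarith
  have hW := Real.Wallis.W_pos n
  have hW' : Real.Wallis.W n ≠ 0 := ne_of_gt hW
  have h2n : (2 * (n : ℝ) + 1) ≠ 0 := by positivity
  rw [tf, cb_sq_eq]
  field_simp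
  rw [show (n:ℝ) * 4 - 1 = -(1 - n * 4) by ring, div_neg]

lemma tendsto_ratio : Tendsto (fun n : ℕ => 4 * (n:ℝ) ^ 2 / ((4 * n - 1) * (2 * n + 1)))
    atTop (nhds (1 / 2)) := by
  have h0 : Tendsto (fun n : ℕ => 1 / (n:ℝ)) atTop (nhds 0) := tendsto_one_div_atTop_nhds_zero_nat
  have h : Tendsto (fun n : ℕ => 4 / ((4 - 1/(n:ℝ)) * (2 + 1/(n:ℝ)))) atTop
      (nhds (4 / ((4 - 0) * (2 + 0)))) := by
    apply Tendsto.div tendsto_const_nhds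
    · exact ((tendsto_const_nhds.sub h0).mul (tendsto_const_nhds.add h0))
    · norm_num
  norm_num at h
  apply h.congr'
  filter_upwards [eventually_ge_atTop 1] with n hn
  have hn1 : (1:ℝ) ≤ (n:ℝ) := by exact_mod_cast hn
  have hn0 : (n:ℝ) ≠ 0 := by positivity
  have d1 : (4:ℝ) - 1/n ≠ 0 := by
    have : 1/(n:ℝ) ≤ 1 := by rw [div_le_one (by linarith)]; linarith
    nlinarith
  have d2 : (2:ℝ) + 1/n ≠ 0 := by positivity
  have d3 : (4:ℝ)*n - 1 ≠ 0 := by nlinarith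
  have d4 : (2:ℝ)*n + 1 ≠ 0 := by positivity
  field_simp

lemma tendsto_neg_tf : Tendsto (fun n : ℕ => - tf n) atTop (nhds (1 / Real.pi)) := by
  have hpi : (Real.pi / 2) ≠ 0 := ne_of_gt Real.pi_div_two_pos
  have h1 : Tendsto (fun n : ℕ => (Real.Wallis.W n)⁻¹) atTop (nhds (Real.pi / 2)⁻¹) :=
    Real.Wallis.tendsto_W_nhds_pi_div_two.inv₀ hpi
  have h2 := tendsto_ratio.mul h1
  have hval : 1 / 2 * (Real.pi / 2)⁻¹ = 1 / Real.pi := by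
    rw [inv_div]; field_simp
  rw [hval] at h2
  exact h2.congr (fun n => (neg_tf_eq n).symm)

theorem stmt_10 :
    ∑' n : ℕ, ((Nat.centralBinom n : ℝ) / 4 ^ n) ^ 2 /
      ((4 * (n : ℝ) + 3) * (1 - 4 * n)) = 1 / Real.pi := by
  have hteq : ∀ n : ℕ, ((Nat.centralBinom n : ℝ) / 4 ^ n) ^ 2 /
      ((4 * (n : ℝ) + 3) * (1 - 4 * n)) = cb n ^ 2 / ((4 * (n : ℝ) + 3) * (1 - 4 * n)) :=
    fun n => rfl
  have hsummable : Summable (fun n : ℕ => cb n ^ 2 / ((4 * (n : ℝ) + 3) * (1 - 4 * n))) := by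
    apply Summable.of_norm_bounded (g := fun n : ℕ => 1 / ((n:ℝ) + 1) ^ 2)
    · have h1 : Summable (fun n : ℕ => 1 / ((n:ℝ)) ^ 2) := by
        simpa using Real.summable_one_div_nat_pow.mpr (le_refl 2)
      have h2 := (summable_nat_add_iff 1).mpr h1
      simpa using h2
    · intro n
      rw [norm_div]
      have hb : ((n:ℝ) + 1) ^ 2 ≤ ‖(4 * (n : ℝ) + 3) * (1 - 4 * n)‖ := by
        rw [norm_mul, Real.norm_eq_abs, Real.norm_eq_abs]
        rcases Nat.eq_zero_or_pos n with h | h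
        · subst h; norm_num
        · have h1 : (1:ℝ) ≤ (n:ℝ) := by exact_mod_cast h
          rw [abs_of_pos (by positivity), abs_of_neg (by nlinarith), neg_sub]
          nlinarith
      have hnum : ‖cb n ^ 2‖ ≤ 1 := by
        rw [norm_pow, Real.norm_eq_abs, abs_of_pos (cb_pos n)]
        nlinarith [cb_le_one n, cb_pos n]
      have hd : (0:ℝ) < ((n:ℝ) + 1) ^ 2 := by positivity
      exact div_le_div₀ zero_le_one hnum hd hb
  have hhs := hsummable.hasSum
  have htends := hhs.tendsto_sum_nat
  have htends2 : Tendsto (fun N : ℕ => ∑ n ∈ Finset.range N,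
      cb n ^ 2 / ((4 * (n : ℝ) + 3) * (1 - 4 * n))) atTop (nhds (1 / Real.pi)) := by
    apply tendsto_neg_tf.congr
    intro N
    exact (sum_range_eq N).symm
  have := tendsto_nhds_unique htends htends2
  calc ∑' n : ℕ, ((Nat.centralBinom n : ℝ) / 4 ^ n) ^ 2 / ((4 * (n : ℝ) + 3) * (1 - 4 * n))
      = ∑' n : ℕ, cb n ^ 2 / ((4 * (n : ℝ) + 3) * (1 - 4 * n)) := by
        exact tsum_congr hteq
    _ = 1 / Real.pi := this
end
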